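/- Let (xᵢ)ᵢ be a net in a von Neumann algebra M, uniformly bounded in operator norm, and (pᵢ)ᵢ an increasing net of projections with pᵢ ↑ 1. Suppose xᵢ = pᵢ xⱼ pᵢ for all j ≥ i. Then (xᵢ) converges in the strong operator topology to some x ∈ M, and xᵢ = pᵢ x pᵢ for every i. -/

import Mathlib

open Filter

local notation "⟪" x ", " y "⟫" => @inner ℂ _ _ x y

private lemma aux_cauchySeq {ι : Type*} [Preorder ι] [Nonempty ι] [IsDirected ι (· ≤ ·)]
    {E : Type*} [PseudoMetricSpace E] (a : ι → E)
    (h : ∀ ε > 0, ∃ i, ∀ j, i ≤ j → ∀ k, i ≤ k → dist (a j) (a k) < ε) :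
    CauchySeq a := by
  constructor
  · exact Filter.map_neBot (hf := atTop_neBot_iff.mpr ⟨‹_›, ‹_›⟩)
  · rw [Filter.prod_map_map_eq]
    intro s hs
    obtain ⟨ε, εpos, hε⟩ := Metric.mem_uniformity_dist.mp hs
    obtain ⟨i, hi⟩ := h ε εpos
    rw [Filter.mem_map]
    refine Filter.mem_prod_iff.mpr ⟨Set.Ici i, Ici_mem_atTop i, Set.Ici i, Ici_mem_atTop i, ?_⟩
    rintro ⟨j, k⟩ ⟨hj, hk⟩
    exact hε (hi j hj k hk)

private lemma aux_proj_norm {H : Type*} [NormedAddCommGroup H] [InnerProductSpace ℂ H]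
    [CompleteSpace H] (q : H →L[ℂ] H) (h1 : IsIdempotentElem q) (h2 : IsSelfAdjoint q) (w : H) :
    ‖q w‖ ≤ ‖w‖ := by
  have hadj : ContinuousLinearMap.adjoint q = q := by
    rw [← ContinuousLinearMap.star_eq_adjoint]; exact h2.star_eq
  have hq : ∀ a b : H, ⟪q a, b⟫ = ⟪a, q b⟫ := fun a b => by
    conv_lhs => rw [← hadj]
    exact ContinuousLinearMap.adjoint_inner_left q b a
  have hqq : q (q w) = q w := by
    conv_rhs => rw [← h1]
    exact (ContinuousLinearMap.mul_apply q q w).symm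
  have h3 : RCLike.re ⟪q w, q w⟫ = ‖q w‖ ^ 2 := inner_self_eq_norm_sq _
  have h4 : ⟪q w, q w⟫ = ⟪w, q w⟫ := by rw [hq, hqq]
  rw [h4] at h3
  have h5 : RCLike.re ⟪w, q w⟫ ≤ ‖⟪w, q w⟫‖ := RCLike.re_le_norm _
  have h6 : ‖⟪w, q w⟫‖ ≤ ‖w‖ * ‖q w‖ := norm_inner_le_norm _ _
  nlinarith [norm_nonneg (q w), norm_nonneg w, sq_nonneg (‖q w‖ - ‖w‖)]

/-- A uniformly bounded net `(xᵢ)` in a von Neumann algebra compatible with an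
increasing net of projections `pᵢ ↑ 1` (in the sense `xᵢ = pᵢ xⱼ pᵢ` for `j ≥ i`)
converges strongly to some `x ∈ M` with `xᵢ = pᵢ x pᵢ`. -/
theorem stmt_14 {H : Type*} [NormedAddCommGroup H] [InnerProductSpace ℂ H]
    [CompleteSpace H] (M : VonNeumannAlgebra H)
    {ι : Type*} [Preorder ι] [Nonempty ι] [IsDirected ι (· ≤ ·)]
    (x p : ι → H →L[ℂ] H) (C : ℝ)
    (hbound : ∀ i, ‖x i‖ ≤ C)
    (hxM : ∀ i, x i ∈ M) (hpM : ∀ i, p i ∈ M)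
    (hproj : ∀ i, IsIdempotentElem (p i) ∧ IsSelfAdjoint (p i))
    (hmono : ∀ i j, i ≤ j → p j * p i = p i ∧ p i * p j = p i)
    (hlim : ∀ v : H, Tendsto (fun i => p i v) atTop (nhds v))
    (hcompat : ∀ i j, i ≤ j → x i = p i * x j * p i) :
    ∃ y : H →L[ℂ] H, y ∈ M ∧
      (∀ v : H, Tendsto (fun i => x i v) atTop (nhds (y v))) ∧
      ∀ i, x i = p i * y * p i := by
  haveI hNB : (atTop : Filter ι).NeBot := atTop_neBot_iff.mpr ⟨‹_›, ‹_›⟩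
  have hC : 0 ≤ C := le_trans (norm_nonneg _) (hbound (Classical.arbitrary ι))
  -- norm bound on applications of x j
  have hxb : ∀ j (w : H), ‖x j w‖ ≤ C * ‖w‖ := fun j w =>
    le_trans ((x j).le_opNorm w) (mul_le_mul_of_nonneg_right (hbound j) (norm_nonneg w))
  have hpn : ∀ i (w : H), ‖p i w‖ ≤ ‖w‖ := fun i w =>
    aux_proj_norm (p i) (hproj i).1 (hproj i).2 w
  have hpsa : ∀ i (a b : H), ⟪p i a, b⟫ = ⟪a, p i b⟫ := fun i a b => by
    have hadj : ContinuousLinearMap.adjoint (p i) = p i := by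
      rw [← ContinuousLinearMap.star_eq_adjoint]; exact (hproj i).2.star_eq
    conv_lhs => rw [← hadj]
    exact ContinuousLinearMap.adjoint_inner_left (p i) b a
  -- the key estimate
  have key : ∀ (u v : H) (i j : ι), i ≤ j →
      ‖⟪x j v, u⟫ - ⟪x i v, u⟫‖ ≤ C * ‖v - p i v‖ * ‖u‖ + C * ‖v‖ * ‖u - p i u‖ := by
    intro u v i j hij
    have h1 : ⟪x i v, u⟫ = ⟪x j (p i v), p i u⟫ := by
      rw [hcompat i j hij]
      simp only [ContinuousLinearMap.mul_apply]
      rw [hpsa]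
    rw [h1]
    have h2 : ⟪x j v, u⟫ - ⟪x j (p i v), p i u⟫
        = ⟪x j (v - p i v), u⟫ + ⟪x j (p i v), u - p i u⟫ := by
      rw [map_sub, inner_sub_left, inner_sub_right]; ring
    rw [h2]
    calc ‖⟪x j (v - p i v), u⟫ + ⟪x j (p i v), u - p i u⟫‖
        ≤ ‖⟪x j (v - p i v), u⟫‖ + ‖⟪x j (p i v), u - p i u⟫‖ := norm_add_le _ _
      _ ≤ ‖x j (v - p i v)‖ * ‖u‖ + ‖x j (p i v)‖ * ‖u - p i u‖ :=
          add_le_add (norm_inner_le_norm _ _) (norm_inner_le_norm _ _)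
      _ ≤ C * ‖v - p i v‖ * ‖u‖ + C * ‖v‖ * ‖u - p i u‖ := by
          apply add_le_add
          · exact mul_le_mul_of_nonneg_right (hxb _ _) (norm_nonneg _)
          · apply mul_le_mul (le_trans (hxb _ _)
              (mul_le_mul_of_nonneg_left (hpn _ _) hC)) le_rfl (norm_nonneg _)
            positivity
  -- the scalar nets are Cauchy, hence convergent
  have hconv : ∀ (v u : H), ∃ L : ℂ, Tendsto (fun j => ⟪x j v, u⟫) atTop (nhds L) := by
    intro v u
    apply cauchySeq_tendsto_of_complete
    apply aux_cauchySeq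
    intro ε εpos
    set D : ℝ := (C + 1) * (‖u‖ + ‖v‖ + 1) with hD
    have hDpos : 0 < D := by positivity
    have hδ : 0 < ε / (4 * D) := by positivity
    have hev : ∀ᶠ i in atTop, ‖p i v - v‖ < ε / (4 * D) ∧ ‖p i u - u‖ < ε / (4 * D) := by
      filter_upwards [Metric.tendsto_nhds.mp (hlim v) _ hδ,
        Metric.tendsto_nhds.mp (hlim u) _ hδ] with i h1 h2
      rw [dist_eq_norm] at h1 h2
      exact ⟨h1, h2⟩
    obtain ⟨i, hi⟩ := hev.exists
    refine ⟨i, fun j hj k hk => ?_⟩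
    have hbnd : ∀ l, i ≤ l → ‖⟪x l v, u⟫ - ⟪x i v, u⟫‖ < ε / 2 := by
      intro l hl
      calc ‖⟪x l v, u⟫ - ⟪x i v, u⟫‖
          ≤ C * ‖v - p i v‖ * ‖u‖ + C * ‖v‖ * ‖u - p i u‖ := key u v i l hl
        _ ≤ C * (ε / (4 * D)) * ‖u‖ + C * ‖v‖ * (ε / (4 * D)) := by
            apply add_le_add
            · apply mul_le_mul_of_nonneg_right _ (norm_nonneg u)
              apply mul_le_mul_of_nonneg_left _ hC
              rw [norm_sub_rev]; exact le_of_lt hi.1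
            · apply mul_le_mul_of_nonneg_left _ (by positivity)
              rw [norm_sub_rev]; exact le_of_lt hi.2
        _ < ε / 2 := by
            have h1 : C * (ε / (4 * D)) * ‖u‖ + C * ‖v‖ * (ε / (4 * D))
                = (ε / (4 * D)) * (C * (‖u‖ + ‖v‖)) := by ring
            rw [h1]
            have h2 : C * (‖u‖ + ‖v‖) ≤ D := by
              rw [hD]
              nlinarith [norm_nonneg u, norm_nonneg v]
            calc (ε / (4 * D)) * (C * (‖u‖ + ‖v‖)) ≤ (ε / (4 * D)) * D :=
                  mul_le_mul_of_nonneg_left h2 (le_of_lt hδ)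
              _ = ε / 4 := by field_simp
              _ < ε / 2 := by linarith
    calc dist ⟪x j v, u⟫ ⟪x k v, u⟫
        ≤ dist ⟪x j v, u⟫ ⟪x i v, u⟫ + dist ⟪x i v, u⟫ ⟪x k v, u⟫ := dist_triangle _ _ _
      _ < ε / 2 + ε / 2 := by
          rw [dist_eq_norm, dist_eq_norm, norm_sub_rev (⟪x i v, u⟫)]
          exact add_lt_add (hbnd j hj) (hbnd k hk)
      _ = ε := by ring
  -- define the limit functional
  choose L hL using hconv
  have hLadd : ∀ v u₁ u₂, L v (u₁ + u₂) = L v u₁ + L v u₂ := by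
    intro v u₁ u₂
    refine tendsto_nhds_unique (hL v (u₁ + u₂)) ?_
    have : (fun j => ⟪x j v, u₁ + u₂⟫) = fun j => ⟪x j v, u₁⟫ + ⟪x j v, u₂⟫ := by
      funext j; rw [inner_add_right]
    rw [this]
    exact (hL v u₁).add (hL v u₂)
  have hLsmul : ∀ v (c : ℂ) u, L v (c • u) = c * L v u := by
    intro v c u
    refine tendsto_nhds_unique (hL v (c • u)) ?_
    have : (fun j => ⟪x j v, c • u⟫) = fun j => c * ⟪x j v, u⟫ := by
      funext j; rw [inner_smul_right]
    rw [this]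
    exact (hL v u).const_mul c
  have hLbound : ∀ v u, ‖L v u‖ ≤ C * ‖v‖ * ‖u‖ := by
    intro v u
    refine le_of_tendsto (hL v u).norm (Eventually.of_forall fun j => ?_)
    calc ‖⟪x j v, u⟫‖ ≤ ‖x j v‖ * ‖u‖ := norm_inner_le_norm _ _
      _ ≤ C * ‖v‖ * ‖u‖ := mul_le_mul_of_nonneg_right (hxb j v) (norm_nonneg u)
  -- build the operator
  let g : H → (H →L[ℂ] ℂ) := fun v => LinearMap.mkContinuous
    { toFun := fun u => L v u
      map_add' := hLadd v
      map_smul' := fun c u => hLsmul v c u } (C * ‖v‖) (hLbound v)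
  have hg : ∀ v u, g v u = L v u := fun v u => rfl
  let y0 : H → H := fun v => (InnerProductSpace.toDual ℂ H).symm (g v)
  have hy0 : ∀ v u, ⟪y0 v, u⟫ = L v u := by
    intro v u
    rw [show (⟪y0 v, u⟫ : ℂ) = InnerProductSpace.toDual ℂ H (y0 v) u from rfl]
    simp only [y0, LinearIsometryEquiv.apply_symm_apply]
    exact hg v u
  have hy0t : ∀ v u, Tendsto (fun j => ⟪x j v, u⟫) atTop (nhds ⟪y0 v, u⟫) := by
    intro v u; rw [hy0]; exact hL v u
  have hy0add : ∀ v w, y0 (v + w) = y0 v + y0 w := by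
    intro v w
    refine ext_inner_right ℂ fun u => ?_
    rw [inner_add_left]
    refine tendsto_nhds_unique (hy0t (v + w) u) ?_
    have : (fun j => ⟪x j (v + w), u⟫) = fun j => ⟪x j v, u⟫ + ⟪x j w, u⟫ := by
      funext j; rw [map_add, inner_add_left]
    rw [this]
    exact (hy0t v u).add (hy0t w u)
  have hy0smul : ∀ (c : ℂ) v, y0 (c • v) = c • y0 v := by
    intro c v
    refine ext_inner_right ℂ fun u => ?_
    rw [inner_smul_left]
    refine tendsto_nhds_unique (hy0t (c • v) u) ?_
    have : (fun j => ⟪x j (c • v), u⟫) = fun j => (starRingEnd ℂ) c * ⟪x j v, u⟫ := by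
      funext j; rw [map_smul, inner_smul_left]
    rw [this]
    exact (hy0t v u).const_mul _
  have hy0bound : ∀ v, ‖y0 v‖ ≤ C * ‖v‖ := by
    intro v
    have h1 : ‖y0 v‖ = ‖g v‖ := LinearIsometryEquiv.norm_map _ _
    rw [h1]
    exact LinearMap.mkContinuous_norm_le _ (by positivity) _
  let y : H →L[ℂ] H := LinearMap.mkContinuous
    { toFun := y0
      map_add' := hy0add
      map_smul' := fun c v => hy0smul c v } C hy0bound
  have hyv : ∀ v, y v = y0 v := fun v => rfl
  have hyt : ∀ v u, Tendsto (fun j => ⟪x j v, u⟫) atTop (nhds ⟪y v, u⟫) := by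
    intro v u; rw [hyv]; exact hy0t v u
  -- x i = p i * y * p i
  have hxeq : ∀ i, x i = p i * y * p i := by
    intro i
    ext v
    refine ext_inner_right ℂ fun u => ?_
    have h1 : ⟪(p i * y * p i) v, u⟫ = ⟪y (p i v), p i u⟫ := by
      simp only [ContinuousLinearMap.mul_apply]
      rw [hpsa]
    rw [h1]
    refine tendsto_nhds_unique ?_ (hyt (p i v) (p i u))
    refine Tendsto.congr' ?_ tendsto_const_nhds
    filter_upwards [Ici_mem_atTop i] with j hj
    have h2 : ⟪x i v, u⟫ = ⟪x j (p i v), p i u⟫ := by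
      rw [hcompat i j hj]
      simp only [ContinuousLinearMap.mul_apply]
      rw [hpsa]
    exact h2
  refine ⟨y, ?_, ?_, hxeq⟩
  · -- membership in M
    have hmem : y ∈ (M : Set (H →L[ℂ] H)) := by
      rw [← M.centralizer_centralizer]
      rw [Set.mem_centralizer_iff]
      intro z hz
      ext v
      refine ext_inner_right ℂ fun u => ?_
      have hzx : ∀ j, x j * z = z * x j := fun j => hz (x j) (hxM j)
      simp only [ContinuousLinearMap.mul_apply]
      have h2 : (fun j => ⟪x j (z v), u⟫)
          = fun j => ⟪x j v, ContinuousLinearMap.adjoint z u⟫ := by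
        funext j
        have hxz : x j (z v) = z (x j v) := by
          rw [← ContinuousLinearMap.mul_apply, ← ContinuousLinearMap.mul_apply, hzx]
        rw [hxz, ContinuousLinearMap.adjoint_inner_right]
      refine tendsto_nhds_unique ?_ (hyt (z v) u)
      rw [show (⟪z (y v), u⟫ : ℂ) = ⟪y v, ContinuousLinearMap.adjoint z u⟫ from
        (ContinuousLinearMap.adjoint_inner_right z (y v) u).symm]
      rw [h2]
      exact hyt v _
    exact hmem
  · -- strong convergence
    intro v
    rw [tendsto_iff_norm_sub_tendsto_zero]
    have hb : ∀ i, ‖x i v - y v‖ ≤ ‖y‖ * ‖p i v - v‖ + ‖p i (y v) - y v‖ := by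
      intro i
      rw [hxeq i]
      have h1 : (p i * y * p i) v - y v
          = p i (y (p i v) - y v) + (p i (y v) - y v) := by
        simp only [ContinuousLinearMap.mul_apply, map_sub]
        abel
      rw [h1]
      calc ‖p i (y (p i v) - y v) + (p i (y v) - y v)‖
          ≤ ‖p i (y (p i v) - y v)‖ + ‖p i (y v) - y v‖ := norm_add_le _ _
        _ ≤ ‖y (p i v) - y v‖ + ‖p i (y v) - y v‖ := by
            exact add_le_add_left (hpn i _) _
        _ ≤ ‖y‖ * ‖p i v - v‖ + ‖p i (y v) - y v‖ := by
            apply add_le_add_left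
            rw [← map_sub]
            exact y.le_opNorm _
    refine squeeze_zero (fun i => norm_nonneg _) hb ?_
    have t1 : Tendsto (fun i => ‖y‖ * ‖p i v - v‖) atTop (nhds 0) := by
      have : Tendsto (fun i => p i v - v) atTop (nhds 0) := by
        simpa using (hlim v).sub_const v
      simpa using (this.norm.const_mul ‖y‖)
    have t2 : Tendsto (fun i => ‖p i (y v) - y v‖) atTop (nhds 0) := by
      have : Tendsto (fun i => p i (y v) - y v) atTop (nhds 0) := by
        simpa using (hlim (y v)).sub_const (y v)
      simpa using this.norm
    simpa using t1.add t2
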